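/- For a probability space (V, E, a), the composite π_ℂ ∘ E ∘ exp(A) restricted to V^⊗n sends X_1⊗⋯⊗X_n to E(X_1X_2⋯X_n), where E: T V → Tℂ is the coalgebra lift of E and A the coderivation lift of a. -/

import Mathlib

open scoped TensorProduct DirectSum

noncomputable section

/-- `n`-th tensor power of `V` over `ℂ`. -/
abbrev Tpow (V : Type) [AddCommGroup V] [Module ℂ V] (n : ℕ) : Type :=
  ⨂[ℂ] _ : Fin n, V

/-- The underlying space `⊕_{n ≥ 1} V^{⊗n}` of the reduced tensor coalgebra
(the summand of index `n` is `V^{⊗(n+1)}`). -/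
abbrev TCo (V : Type) [AddCommGroup V] [Module ℂ V] : Type :=
  ⨁ n : ℕ, Tpow V (n + 1)

variable {V W : Type} [AddCommGroup V] [Module ℂ V] [AddCommGroup W] [Module ℂ W]

/-- Cast between tensor powers of equal exponents. -/
def castT {m n : ℕ} (h : m = n) : Tpow V m ≃ₗ[ℂ] Tpow V n :=
  PiTensorProduct.reindex ℂ (fun _ => V) (finCongr h)

/-- Splitting `V^{⊗(i+1)+(j+1)} ≅ V^{⊗(i+1)} ⊗ V^{⊗(j+1)}`. -/
def splitT (i j : ℕ) :
    Tpow V ((i + 1) + (j + 1)) ≃ₗ[ℂ] Tpow V (i + 1) ⊗[ℂ] Tpow V (j + 1) :=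
  (PiTensorProduct.reindex ℂ (fun _ => V) finSumFinEquiv.symm).trans
    (PiTensorProduct.tmulEquiv ℂ V).symm

/-- Inclusion of the `n`-indexed summand `V^{⊗(n+1)} → T V`. -/
def inclT (V : Type) [AddCommGroup V] [Module ℂ V] (n : ℕ) :
    Tpow V (n + 1) →ₗ[ℂ] TCo V :=
  DirectSum.lof ℂ ℕ (fun m => Tpow V (m + 1)) n

/-- The deconcatenation coproduct on the reduced tensor coalgebra. -/
def Δ (V : Type) [AddCommGroup V] [Module ℂ V] : TCo V →ₗ[ℂ] TCo V ⊗[ℂ] TCo V :=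
  DirectSum.toModule ℂ ℕ (TCo V ⊗[ℂ] TCo V) fun n =>
    ∑ i : Fin n,
      (TensorProduct.map (inclT V i) (inclT V (n - 1 - i))).comp
        ((splitT (i : ℕ) (n - 1 - i)).toLinearMap.comp
          (castT (show n + 1 = ((i : ℕ) + 1) + ((n - 1 - (i : ℕ)) + 1) by
            have := i.isLt; omega)).toLinearMap)

/-- The projection `π₁ : T V → V` onto the first tensor component. -/
def pr (V : Type) [AddCommGroup V] [Module ℂ V] : TCo V →ₗ[ℂ] V :=
  DirectSum.toModule ℂ ℕ V fun n =>
    match n with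
    | 0 => (PiTensorProduct.subsingletonEquiv (0 : Fin 1)).toLinearMap
    | _ + 1 => 0

/-- The inclusion `V → T V` as the first tensor component. -/
def inclV (V : Type) [AddCommGroup V] [Module ℂ V] : V →ₗ[ℂ] TCo V :=
  (inclT V 0).comp (PiTensorProduct.subsingletonEquiv (0 : Fin 1) : Tpow V 1 ≃ₗ[ℂ] V).symm.toLinearMap

/-- A linear map `T V → T W` is a coalgebra morphism when it commutes with
the deconcatenation coproducts. -/
def IsCoalgMap (F : TCo V →ₗ[ℂ] TCo W) : Prop :=
  (Δ W).comp F = (TensorProduct.map F F).comp (Δ V)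

/-- A linear map `T V → T V` is a coderivation when it satisfies the co-Leibniz rule
`Δ ∘ B = (B ⊗ id + id ⊗ B) ∘ Δ`. -/
def IsCoder (B : TCo V →ₗ[ℂ] TCo V) : Prop :=
  (Δ V).comp B =
    (TensorProduct.map B LinearMap.id + TensorProduct.map LinearMap.id B).comp (Δ V)

/-- `F : T V → T W` is the coalgebra lift of the linear map `f : V → W`:
it is a coalgebra morphism whose projection to `W` is `f` on `V` and `0` on `V^{⊗n}`, `n ≥ 2`. -/
def IsCoalgLift (f : V →ₗ[ℂ] W) (F : TCo V →ₗ[ℂ] TCo W) : Prop :=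
  IsCoalgMap F ∧ (pr W).comp (F.comp (inclV V)) = f ∧
    ∀ n : ℕ, n ≠ 0 → (pr W).comp (F.comp (inclT V n)) = 0

/-- `A : T V → T V` is the coderivation lift of the bilinear map `a : V ⊗ V → V`:
it is a coderivation whose projection to `V` is `a` on `V^{⊗2}` and `0` on the
other tensor powers. -/
def IsCoderLift (a : V →ₗ[ℂ] V →ₗ[ℂ] V) (A : TCo V →ₗ[ℂ] TCo V) : Prop :=
  IsCoder A ∧
    (∀ X : Fin 2 → V,
      pr V (A (inclT V 1 (PiTensorProduct.tprod ℂ X))) = a (X 0) (X 1)) ∧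
    ∀ n : ℕ, n ≠ 1 → (pr V).comp (A.comp (inclT V n)) = 0

/-- The exponential `exp(A) = Σ_k A^k / k!` of a tensor-degree-lowering map `A` on `T V`
(on the summand `V^{⊗(n+1)}` the series truncates at `k = n`). -/
def expT (A : TCo V →ₗ[ℂ] TCo V) : TCo V →ₗ[ℂ] TCo V :=
  DirectSum.toModule ℂ ℕ (TCo V) fun n =>
    (∑ k ∈ Finset.range (n + 1), ((k.factorial : ℂ)⁻¹) • (A ^ k)).comp (inclT V n)

/-- Left-associated product of a nonempty list (junk value `0` on the empty list). -/
def listProd (mul : V →ₗ[ℂ] V →ₗ[ℂ] V) : List V → V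
  | [] => 0
  | x :: xs => xs.foldl (fun u v => mul u v) x

/-- The `n`-fold product `X 0 · X 1 ⋯ X (n-1)`. -/
def prodF (mul : V →ₗ[ℂ] V →ₗ[ℂ] V) {n : ℕ} (X : Fin n → V) : V :=
  listProd mul (List.ofFn X)

section Lemmas
variable {V : Type} [AddCommGroup V] [Module ℂ V]

lemma pr_incl_zero (t : Tpow V 1) :
    pr V (inclT V 0 t) = PiTensorProduct.subsingletonEquiv (0 : Fin 1) t := by
  simp [pr, inclT, DirectSum.toModule_lof]

lemma pr_incl_succ (m : ℕ) (t : Tpow V (m + 2)) :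
    pr V (inclT V (m + 1) t) = 0 := by
  simp [pr, inclT, DirectSum.toModule_lof]

/-- first `s+1` entries -/
def hd {n : ℕ} (X : Fin (n + 1) → V) (s : Fin n) : Fin ((s : ℕ) + 1) → V :=
  fun k => X ⟨(k : ℕ), by omega⟩

/-- last `n-s` entries -/
def tl {n : ℕ} (X : Fin (n + 1) → V) (s : Fin n) : Fin ((n - 1 - (s : ℕ)) + 1) → V :=
  fun k => X ⟨(s : ℕ) + 1 + (k : ℕ), by omega⟩

lemma Δ_incl_tprod {n : ℕ} (X : Fin (n + 1) → V) :
    Δ V (inclT V n (PiTensorProduct.tprod ℂ X)) =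
      ∑ s : Fin n, inclT V s (PiTensorProduct.tprod ℂ (hd X s)) ⊗ₜ[ℂ]
        inclT V (n - 1 - (s : ℕ)) (PiTensorProduct.tprod ℂ (tl X s)) := by
  rw [Δ, inclT, DirectSum.toModule_lof]
  rw [LinearMap.sum_apply]
  refine Finset.sum_congr rfl fun s _ => ?_
  simp only [LinearMap.comp_apply, castT, splitT, LinearEquiv.coe_coe,
    LinearEquiv.trans_apply, PiTensorProduct.reindex_tprod,
    PiTensorProduct.tmulEquiv_symm_apply, Function.comp_apply]
  rw [TensorProduct.map_tmul]
  congr 2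

lemma pr_incl_ne (j : ℕ) (hj : j ≠ 0) (t : Tpow V (j + 1)) : pr V (inclT V j t) = 0 := by
  obtain ⟨j', rfl⟩ := Nat.exists_eq_succ_of_ne_zero hj
  exact pr_incl_succ _ _

lemma prA_eq (a : V →ₗ[ℂ] V →ₗ[ℂ] V) (A : TCo V →ₗ[ℂ] TCo V) (hA : IsCoderLift a A) :
    (pr V).comp A =
      (TensorProduct.lift a).comp ((TensorProduct.map (pr V) (pr V)).comp (Δ V)) := by
  apply DirectSum.linearMap_ext
  intro m
  apply PiTensorProduct.ext
  apply MultilinearMap.ext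
  intro X
  simp only [LinearMap.compMultilinearMap_apply, LinearMap.comp_apply]
  have hΔ := Δ_incl_tprod (V := V) X
  rw [show (DirectSum.lof ℂ ℕ (fun m => Tpow V (m+1)) m) = inclT V m from rfl]
  rw [hΔ, map_sum, map_sum]
  match m with
  | 0 =>
      have := LinearMap.congr_fun (hA.2.2 0 (by decide)) (PiTensorProduct.tprod ℂ X)
      simp only [LinearMap.comp_apply, LinearMap.zero_apply] at this
      rw [Fin.sum_univ_zero]
      exact this
  | 1 =>
      rw [Fin.sum_univ_one, TensorProduct.map_tmul]
      simp only [Fin.val_zero, Fin.isValue, Nat.sub_zero, Nat.sub_self]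
      rw [pr_incl_zero, pr_incl_zero, hA.2.1 X]
      simp only [PiTensorProduct.subsingletonEquiv_apply_tprod, TensorProduct.lift.tmul]
      congr 1
      · exact congrArg _ (PiTensorProduct.subsingletonEquiv_apply_tprod (i₀ := (0 : Fin 1)) (hd X 0 : Fin 1 → V)).symm
      · exact (PiTensorProduct.subsingletonEquiv_apply_tprod (i₀ := (0 : Fin 1)) (tl X 0 : Fin 1 → V)).symm
  | (m+2) =>
      have hL := LinearMap.congr_fun (hA.2.2 (m+2) (by omega)) (PiTensorProduct.tprod ℂ X)
      simp only [LinearMap.comp_apply, LinearMap.zero_apply] at hL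
      rw [hL]
      symm
      apply Finset.sum_eq_zero
      intro s _
      rw [TensorProduct.map_tmul]
      rcases Nat.eq_zero_or_pos (s : ℕ) with h0 | hpos
      · rw [pr_incl_ne ((m+2)-1-(s:ℕ)) (by omega), TensorProduct.tmul_zero, map_zero]
      · rw [pr_incl_ne (s:ℕ) (by omega), TensorProduct.zero_tmul, map_zero]

lemma mapA_pow_left (A : TCo V →ₗ[ℂ] TCo V) (i : ℕ) :
    (TensorProduct.map A (LinearMap.id : TCo V →ₗ[ℂ] TCo V)) ^ i =
      TensorProduct.map (A ^ i) LinearMap.id := by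
  induction i with
  | zero => simp [Module.End.one_eq_id, TensorProduct.map_id]
  | succ i ih =>
      rw [pow_succ, Module.End.mul_eq_comp, ih, ← TensorProduct.map_comp, pow_succ,
        Module.End.mul_eq_comp]
      simp

lemma mapA_pow_right (A : TCo V →ₗ[ℂ] TCo V) (i : ℕ) :
    (TensorProduct.map (LinearMap.id : TCo V →ₗ[ℂ] TCo V) A) ^ i =
      TensorProduct.map LinearMap.id (A ^ i) := by
  induction i with
  | zero => simp [Module.End.one_eq_id, TensorProduct.map_id]
  | succ i ih =>
      rw [pow_succ, Module.End.mul_eq_comp, ih, ← TensorProduct.map_comp, pow_succ,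
        Module.End.mul_eq_comp]
      simp

lemma binom (A : TCo V →ₗ[ℂ] TCo V) (hA : IsCoder A) (k : ℕ) :
    (Δ V).comp (A ^ k) = ∑ i ∈ Finset.range (k + 1),
      (k.choose i) • (TensorProduct.map (A ^ i) (A ^ (k - i))).comp (Δ V) := by
  set L := TensorProduct.map A (LinearMap.id : TCo V →ₗ[ℂ] TCo V) with hL
  set R := TensorProduct.map (LinearMap.id : TCo V →ₗ[ℂ] TCo V) A with hR
  have hcomm : Commute L R := by
    show L * R = R * L
    rw [Module.End.mul_eq_comp, Module.End.mul_eq_comp, hL, hR,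
      ← TensorProduct.map_comp, ← TensorProduct.map_comp]
    simp
  have hA' : (Δ V).comp A = (L + R).comp (Δ V) := hA
  have step : ∀ k : ℕ, (Δ V).comp (A ^ k) = ((L + R) ^ k).comp (Δ V) := by
    intro k
    induction k with
    | zero => simp [Module.End.one_eq_id]
    | succ k ih =>
        rw [pow_succ, Module.End.mul_eq_comp, ← LinearMap.comp_assoc, ih,
          LinearMap.comp_assoc, hA', ← LinearMap.comp_assoc, pow_succ,
          Module.End.mul_eq_comp]
  rw [step, hcomm.add_pow]
  refine LinearMap.ext fun x => ?_
  simp only [LinearMap.comp_apply, LinearMap.sum_apply, LinearMap.smul_apply]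
  refine Finset.sum_congr rfl fun i hi => ?_
  have hmm : L ^ i * R ^ (k - i) = TensorProduct.map (A ^ i) (A ^ (k - i)) := by
    rw [mapA_pow_left, mapA_pow_right, Module.End.mul_eq_comp, ← TensorProduct.map_comp]
    simp
  rw [hmm]
  simp [Module.End.mul_apply, Module.End.natCast_apply]

section Prod
variable (a : V →ₗ[ℂ] V →ₗ[ℂ] V)

lemma foldl_assoc (hassoc : ∀ x y z : V, a (a x y) z = a x (a y z)) (ys : List V) : ∀ u y : V,
    a u (ys.foldl (fun p q => a p q) y) = ys.foldl (fun p q => a p q) (a u y) := by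
  induction ys with
  | nil => intro u y; rfl
  | cons z zs ih =>
      intro u y
      simp only [List.foldl_cons]
      rw [ih, hassoc]

lemma listProd_append (hassoc : ∀ x y z : V, a (a x y) z = a x (a y z)) (L1 L2 : List V) (h1 : L1 ≠ []) (h2 : L2 ≠ []) :
    listProd a (L1 ++ L2) = a (listProd a L1) (listProd a L2) := by
  match L1, L2 with
  | x :: xs, y :: ys =>
    show listProd a (x :: (xs ++ y :: ys)) = _
    rw [listProd, listProd, listProd, List.foldl_append, List.foldl_cons]
    rw [foldl_assoc a hassoc]

lemma prod_split (hassoc : ∀ x y z : V, a (a x y) z = a x (a y z)) {n : ℕ} (X : Fin (n + 1) → V) (s : Fin n) :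
    a (prodF a (hd X s)) (prodF a (tl X s)) = prodF a X := by
  rw [prodF, prodF, prodF, ← listProd_append a hassoc _ _ (by simp) (by simp)]
  congr 1
  apply List.ext_getElem
  · simp; omega
  · intro i h1 h2
    simp only [List.getElem_append, List.getElem_ofFn, List.length_ofFn] at *
    split
    · simp [hd]
    · simp only [tl]
      congr 1
      ext
      simp
      omega

end Prod

lemma aux_ite (a : V →ₗ[ℂ] V →ₗ[ℂ] V) (P Q : Prop) [Decidable P] [Decidable Q] (u v : V) :
    (a (if P then u else 0)) (if Q then v else 0) = if P ∧ Q then a u v else 0 := by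
  split_ifs with h1 h2 h3 <;> simp_all

lemma key (a : V →ₗ[ℂ] V →ₗ[ℂ] V) (hassoc : ∀ x y z : V, a (a x y) z = a x (a y z))
    (A : TCo V →ₗ[ℂ] TCo V) (hA : IsCoderLift a A) :
    ∀ n k (X : Fin (n + 1) → V),
      pr V ((A ^ k) (inclT V n (PiTensorProduct.tprod ℂ X))) =
        if k = n then ((n.factorial : ℂ)) • prodF a X else 0 := by
  intro n
  induction n using Nat.strong_induction_on with
  | _ n IH =>
  intro k X
  match k with
  | 0 =>
    rw [pow_zero, Module.End.one_apply]
    match n with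
    | 0 =>
        rw [pr_incl_zero]
        simp [PiTensorProduct.subsingletonEquiv_apply_tprod, prodF, listProd, List.ofFn_succ]
    | (n + 1) => rw [pr_incl_succ]; simp
  | (m + 1) =>
    have hx := LinearMap.congr_fun (prA_eq a A hA)
      ((A ^ m) (inclT V n (PiTensorProduct.tprod ℂ X)))
    simp only [LinearMap.comp_apply] at hx
    have hpow : (A ^ (m + 1)) (inclT V n (PiTensorProduct.tprod ℂ X)) =
        A ((A ^ m) (inclT V n (PiTensorProduct.tprod ℂ X))) := by
      rw [pow_succ']; rfl
    rw [hpow, hx]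
    have hbin := LinearMap.congr_fun (binom A hA.1 m) (inclT V n (PiTensorProduct.tprod ℂ X))
    simp only [LinearMap.comp_apply, LinearMap.sum_apply, LinearMap.smul_apply] at hbin
    rw [hbin, Δ_incl_tprod]
    have h1 : ∀ (s : Fin n) (i : ℕ),
        pr V ((A ^ i) (inclT V (s : ℕ) (PiTensorProduct.tprod ℂ (hd X s)))) =
          if i = (s : ℕ) then (((s : ℕ).factorial : ℂ)) • prodF a (hd X s) else 0 :=
      fun s i => IH s s.isLt i (hd X s)
    have h2 : ∀ (s : Fin n) (i : ℕ),
        pr V ((A ^ i) (inclT V (n - 1 - (s : ℕ)) (PiTensorProduct.tprod ℂ (tl X s)))) =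
          if i = n - 1 - (s : ℕ) then (((n - 1 - (s : ℕ)).factorial : ℂ)) • prodF a (tl X s)
          else 0 :=
      fun s i => IH (n - 1 - (s : ℕ)) (by have := s.isLt; omega) i (tl X s)
    simp only [map_sum, map_nsmul, TensorProduct.map_tmul, TensorProduct.lift.tmul,
      h1, h2, aux_ite, map_smul, LinearMap.smul_apply, prod_split a hassoc]
    match n with
    | 0 => simp
    | (n' + 1) =>
      simp only [Nat.add_sub_cancel]
      by_cases hmn : m = n'
      · subst hmn
        rw [if_pos rfl]
        simp only [Finset.smul_sum]
        rw [Finset.sum_comm]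
        have hinner : ∀ s : Fin (m + 1),
            (∑ x ∈ Finset.range (m + 1), m.choose x •
              (if x = (s : ℕ) ∧ m - x = m - (s : ℕ) then
                (((m - (s : ℕ)).factorial : ℂ)) • (((s : ℕ).factorial : ℂ)) • prodF a X
              else 0)) = (m.factorial : ℂ) • prodF a X := by
          intro s
          rw [Finset.sum_eq_single_of_mem ((s : ℕ)) (Finset.mem_range.mpr s.isLt)
            (fun b _ hb => by rw [if_neg (fun hc => hb hc.1), smul_zero])]
          rw [if_pos ⟨rfl, rfl⟩, ← Nat.cast_smul_eq_nsmul ℂ, smul_smul, smul_smul,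
            ← Nat.cast_mul, ← Nat.cast_mul]
          congr 1
          rw [← Nat.choose_mul_factorial_mul_factorial (Nat.lt_succ_iff.mp s.isLt)]
          ring
        simp only [hinner]
        rw [Finset.sum_const, Finset.card_univ, Fintype.card_fin,
          ← Nat.cast_smul_eq_nsmul ℂ, smul_smul, ← Nat.cast_mul, Nat.factorial_succ]
      · rw [if_neg (by omega)]
        apply Finset.sum_eq_zero
        intro x hx
        rw [Finset.sum_eq_zero, smul_zero]
        intro s _
        rw [if_neg]
        rintro ⟨rfl, hc⟩
        have := s.isLt
        have := Finset.mem_range.mp hx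
        omega

lemma prE (E : V →ₗ[ℂ] ℂ) (Ehat : TCo V →ₗ[ℂ] TCo ℂ) (hE : IsCoalgLift E Ehat) :
    (pr ℂ).comp Ehat = E.comp (pr V) := by
  apply DirectSum.linearMap_ext
  intro m
  apply LinearMap.ext
  intro t
  rw [show (DirectSum.lof ℂ ℕ (fun m => Tpow V (m+1)) m) = inclT V m from rfl]
  match m with
  | 0 =>
      have h := LinearMap.congr_fun hE.2.1
        (PiTensorProduct.subsingletonEquiv (0 : Fin 1) t)
      simp only [inclV, LinearMap.comp_apply, LinearEquiv.coe_coe,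
        LinearEquiv.symm_apply_apply] at h
      simp only [LinearMap.comp_apply, pr_incl_zero]
      exact h
  | (m + 1) =>
      have h := LinearMap.congr_fun (hE.2.2 (m + 1) (by omega)) t
      simp only [LinearMap.comp_apply, LinearMap.zero_apply] at h
      simp only [LinearMap.comp_apply, pr_incl_succ, map_zero]
      exact h

lemma expT_incl (A : TCo V →ₗ[ℂ] TCo V) (n : ℕ) (t : Tpow V (n + 1)) :
    expT A (inclT V n t) =
      ∑ k ∈ Finset.range (n + 1), ((k.factorial : ℂ)⁻¹) • (A ^ k) (inclT V n t) := by
  rw [expT, inclT, DirectSum.toModule_lof]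
  simp only [LinearMap.comp_apply, LinearMap.sum_apply, LinearMap.smul_apply]
  rfl
end Lemmas


/-- For a probability space `(V, E, a)`, the composite `π_ℂ ∘ Ê ∘ exp(A)` on `V^{⊗n}`
sends `X₁ ⊗ ⋯ ⊗ Xₙ` to the joint moment `E(X₁X₂⋯Xₙ)`. -/
theorem moments_from_exp_and_lift
    {V : Type} [AddCommGroup V] [Module ℂ V]
    (E : V →ₗ[ℂ] ℂ) (a : V →ₗ[ℂ] V →ₗ[ℂ] V)
    (hassoc : ∀ x y z : V, a (a x y) z = a x (a y z))
    (Ehat : TCo V →ₗ[ℂ] TCo ℂ) (hE : IsCoalgLift E Ehat)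
    (A : TCo V →ₗ[ℂ] TCo V) (hA : IsCoderLift a A)
    (n : ℕ) (X : Fin (n + 1) → V) :
    pr ℂ (Ehat (expT A (inclT V n (PiTensorProduct.tprod ℂ X)))) =
      E (prodF a X) := by
  have h1 := LinearMap.congr_fun (prE E Ehat hE)
    (expT A (inclT V n (PiTensorProduct.tprod ℂ X)))
  simp only [LinearMap.comp_apply] at h1
  rw [h1, expT_incl]
  rw [map_sum]
  have h2 : ∀ k, pr V (((k.factorial : ℂ)⁻¹) • (A ^ k) (inclT V n (PiTensorProduct.tprod ℂ X)))
      = ((k.factorial : ℂ)⁻¹) • (if k = n then ((n.factorial : ℂ)) • prodF a X else 0) := by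
    intro k
    rw [map_smul, key a hassoc A hA n k X]
  simp only [h2]
  rw [Finset.sum_eq_single_of_mem n (Finset.mem_range.mpr (by omega))
    (fun b _ hb => by rw [if_neg hb, smul_zero])]
  rw [if_pos rfl, smul_smul, inv_mul_cancel₀ (by exact_mod_cast n.factorial_ne_zero), one_smul]
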